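/- If T ∈ B(H) and there exists a nonnegative operator P ∈ B(H) with TT* = T*PT, then (1 + ‖P‖)·T*T - TT* ≥ 0; in particular T is posinormal. -/

import Mathlib

open ContinuousLinearMap

/-- If `TT* = T*PT` with `P ≥ 0`, then `(1 + ‖P‖)·T*T - TT* ≥ 0`; in particular
`T` is posinormal. -/
theorem stmt_4 {H : Type*} [NormedAddCommGroup H] [InnerProductSpace ℂ H] [CompleteSpace H]
    (T P : H →L[ℂ] H) (hP : ∀ f : H, 0 ≤ (inner ℂ (P f) f : ℂ).re)
    (h : T * adjoint T = adjoint T * P * T) :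
    (∀ f : H, 0 ≤ (inner ℂ (((1 + ‖P‖) • ((adjoint T) * T) - T * adjoint T) f) f : ℂ).re) ∧
    (∃ lam : ℝ, 0 < lam ∧
      ∀ f : H, 0 ≤ (inner ℂ ((lam ^ 2 • ((adjoint T) * T) - T * adjoint T) f) f : ℂ).re) := by
  have key : ∀ (c : ℝ), 1 + ‖P‖ ≤ c →
      ∀ f : H, 0 ≤ (inner ℂ ((c • ((adjoint T) * T) - T * adjoint T) f) f : ℂ).re := by
    intro c hc f
    have h1 : (T * adjoint T) f = adjoint T (P (T f)) := by rw [h]; rfl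
    have h2 : ((adjoint T) * T) f = adjoint T (T f) := rfl
    have hTT : (inner ℂ (((adjoint T) * T) f) f : ℂ).re = ‖T f‖ ^ 2 := by
      rw [h2, adjoint_inner_left]
      exact inner_self_eq_norm_sq (𝕜 := ℂ) (T f)
    have hB : (inner ℂ ((T * adjoint T) f) f : ℂ).re ≤ ‖P‖ * ‖T f‖ ^ 2 := by
      rw [h1, adjoint_inner_left]
      have h3 : (inner ℂ (P (T f)) (T f) : ℂ).re ≤ ‖P (T f)‖ * ‖T f‖ :=
        le_trans (Complex.re_le_norm _)
          (by exact norm_inner_le_norm _ _)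
      have h4 : ‖P (T f)‖ ≤ ‖P‖ * ‖T f‖ := le_opNorm P (T f)
      nlinarith [norm_nonneg (T f)]
    have hE : (inner ℂ ((c • ((adjoint T) * T) - T * adjoint T) f) f : ℂ).re
        = c * ‖T f‖ ^ 2 - (inner ℂ ((T * adjoint T) f) f : ℂ).re := by
      rw [sub_apply, inner_sub_left, smul_apply,
        RCLike.real_smul_eq_coe_smul (K := ℂ) c, inner_smul_left, ← hTT]
      simp [Complex.sub_re, Complex.mul_re]
    rw [hE]
    nlinarith [norm_nonneg (T f), opNorm_nonneg P, sq_nonneg (‖T f‖)]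
  refine ⟨key _ le_rfl, Real.sqrt (1 + ‖P‖), Real.sqrt_pos.mpr (by positivity), ?_⟩
  have : Real.sqrt (1 + ‖P‖) ^ 2 = 1 + ‖P‖ := Real.sq_sqrt (by positivity)
  rw [this]
  exact key _ le_rfl
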